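/- arXiv:1809.09020 — 2 statements merged into one kernel-verified Lean document; each statement's English description precedes it below -/
import Mathlib

section
/- Let Γ₁, Γ₂, Γ₃ be nonzero reals with Γ₃ ≠ 0, and consider the quadratic form on ℂ² given by q(v₁,v₂) = (Γ₁/Γ₃)(Γ₁+Γ₃)|v₁|² + (Γ₁Γ₂/Γ₃)(v₁·conj(v₂) + conj(v₁)·v₂) + (Γ₂/Γ₃)(Γ₂+Γ₃)|v₂|². Then q is definite if and only if (Γ₁Γ₂/Γ₃)(Γ₁+Γ₂+Γ₃) > 0. -/
lemma vertex_key (A B C : ℝ) (hD : 0 < A * C - B * B) (hA : A ≠ 0)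
    (v₁ v₂ : ℂ) (hv : (v₁, v₂) ≠ (0, 0)) :
    0 < A * (A * Complex.normSq v₁
        + B * (v₁ * (starRingEnd ℂ) v₂ + (starRingEnd ℂ) v₁ * v₂).re
        + C * Complex.normSq v₂) := by
  set a := v₁.re; set b := v₁.im; set c := v₂.re; set d := v₂.im
  have hre : (v₁ * (starRingEnd ℂ) v₂ + (starRingEnd ℂ) v₁ * v₂).re
      = 2 * (a * c + b * d) := by
    simp [Complex.mul_re, Complex.add_re, Complex.conj_re, Complex.conj_im]
    ring
  have hn1 : Complex.normSq v₁ = a ^ 2 + b ^ 2 := by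
    simp [Complex.normSq_apply]; ring
  have hn2 : Complex.normSq v₂ = c ^ 2 + d ^ 2 := by
    simp [Complex.normSq_apply]; ring
  rw [hre, hn1, hn2]
  have hA2 : 0 < A ^ 2 := by positivity
  rcases lt_or_ge 0 (c ^ 2 + d ^ 2) with hcd | hcd
  · nlinarith [sq_nonneg (A * a + B * c), sq_nonneg (A * b + B * d),
      mul_pos hD hcd, sq_nonneg a, sq_nonneg b]
  · have hc : c = 0 := by nlinarith [sq_nonneg c, sq_nonneg d]
    have hd : d = 0 := by nlinarith [sq_nonneg c, sq_nonneg d]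
    have hv2 : v₂ = 0 := by
      apply Complex.ext <;> simpa [hc, hd]
    have hv1 : v₁ ≠ 0 := by
      intro h; exact hv (by simp [h, hv2])
    have hab : 0 < a ^ 2 + b ^ 2 := by
      have : a ≠ 0 ∨ b ≠ 0 := by
        by_contra hcon
        push_neg at hcon
        exact hv1 (Complex.ext (by simpa using hcon.1) (by simpa using hcon.2))
      rcases this with h | h
      · have ha2 : 0 < a ^ 2 := by positivity
        nlinarith [sq_nonneg b]
      · have hb2 : 0 < b ^ 2 := by positivity
        nlinarith [sq_nonneg a]
    rw [hc, hd]
    nlinarith [mul_pos hA2 hab]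

/-- Discriminant condition (D) at the vertex `a`: the quadratic form
`q(v₁,v₂) = (Γ₁/Γ₃)(Γ₁+Γ₃)|v₁|² + (Γ₁Γ₂/Γ₃)(v₁ v̄₂ + v̄₁ v₂) + (Γ₂/Γ₃)(Γ₂+Γ₃)|v₂|²`
on `ℂ²` is definite if and only if `(Γ₁Γ₂/Γ₃)(Γ₁+Γ₂+Γ₃) > 0`. -/
theorem vertex_a_definite_iff (Γ₁ Γ₂ Γ₃ : ℝ) (h₁ : Γ₁ ≠ 0) (h₂ : Γ₂ ≠ 0) (h₃ : Γ₃ ≠ 0) :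
    ((∀ v₁ v₂ : ℂ, (v₁, v₂) ≠ (0, 0) →
        0 < Γ₁ / Γ₃ * (Γ₁ + Γ₃) * Complex.normSq v₁
            + Γ₁ * Γ₂ / Γ₃ * (v₁ * (starRingEnd ℂ) v₂ + (starRingEnd ℂ) v₁ * v₂).re
            + Γ₂ / Γ₃ * (Γ₂ + Γ₃) * Complex.normSq v₂) ∨
     (∀ v₁ v₂ : ℂ, (v₁, v₂) ≠ (0, 0) →
        Γ₁ / Γ₃ * (Γ₁ + Γ₃) * Complex.normSq v₁
            + Γ₁ * Γ₂ / Γ₃ * (v₁ * (starRingEnd ℂ) v₂ + (starRingEnd ℂ) v₁ * v₂).re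
            + Γ₂ / Γ₃ * (Γ₂ + Γ₃) * Complex.normSq v₂ < 0))
    ↔ 0 < Γ₁ * Γ₂ / Γ₃ * (Γ₁ + Γ₂ + Γ₃) := by
  set A := Γ₁ / Γ₃ * (Γ₁ + Γ₃) with hAdef
  set B := Γ₁ * Γ₂ / Γ₃ with hBdef
  set C := Γ₂ / Γ₃ * (Γ₂ + Γ₃) with hCdef
  have hD : Γ₁ * Γ₂ / Γ₃ * (Γ₁ + Γ₂ + Γ₃) = A * C - B * B := by
    rw [hAdef, hBdef, hCdef]; field_simp; ring
  rw [hBdef] at hD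
  rw [hD]
  constructor
  · rintro (h | h)
    · have hA0 : 0 < A := by
        have := h 1 0 (by simp)
        simpa using this
      have hq := h (-B : ℂ) (A : ℂ) (by simp [hA0.ne'])
      have hq' : 0 < A * B ^ 2 - 2 * A * B ^ 2 + C * A ^ 2 := by
        simp [Complex.normSq_ofReal, Complex.normSq_neg, Complex.mul_re,
          Complex.conj_re, Complex.conj_im] at hq
        nlinarith [hq]
      nlinarith [hq', hA0, mul_pos hA0 hA0]
    · have hA0 : A < 0 := by
        have := h 1 0 (by simp)
        simpa using this
      have hq := h (-B : ℂ) (A : ℂ) (by simp [hA0.ne])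
      have hq' : A * B ^ 2 - 2 * A * B ^ 2 + C * A ^ 2 < 0 := by
        simp [Complex.normSq_ofReal, Complex.normSq_neg, Complex.mul_re,
          Complex.conj_re, Complex.conj_im] at hq
        nlinarith [hq]
      nlinarith [hq', hA0, mul_pos_of_neg_of_neg hA0 hA0]
  · intro hDpos
    have hA0 : A ≠ 0 := by
      intro h; rw [h] at hDpos; nlinarith [sq_nonneg B]
    rcases hA0.lt_or_gt with hAneg | hApos
    · right
      intro v₁ v₂ hv
      have key := vertex_key A B C hDpos hA0 v₁ v₂ hv
      nlinarith [key, hAneg]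
    · left
      intro v₁ v₂ hv
      have key := vertex_key A B C hDpos hA0 v₁ v₂ hv
      nlinarith [key, hApos]
end

section
/- Let G be a compact Lie group acting smoothly on a symplectic manifold (M, Ω) with momentum map J : M → 𝔤* satisfying ⟨DJₘ(v), ξ⟩ = Ω(ξ_M(m), v) for all ξ ∈ 𝔤 and v ∈ TₘM. Then for each m ∈ M the image of DJₘ equals the annihilator in 𝔤* of the Lie algebra 𝔤ₘ of the stabilizer of m (the bifurcation lemma). -/
/-- The bifurcation lemma, at a point `m` of a Hamiltonian `G`-space. The data at `m` is
purely linear-algebraic: `T = TₘM` carries the (nondegenerate, skew-symmetric) symplectic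
form `Ω`, the infinitesimal action is the linear map `act : 𝔤 → T`, `ξ ↦ ξ_M(m)` (whose
kernel is `𝔤ₘ`, the Lie algebra of the stabilizer of `m`), and the derivative of the
momentum map `DJ : T → 𝔤*` satisfies the defining relation `⟨DJ(v), ξ⟩ = Ω(ξ_M(m), v)`.
Conclusion: the image of `DJₘ` equals the annihilator `𝔤ₘ°` of `𝔤ₘ` in `𝔤*`. -/
theorem bifurcation_lemma
    (g T : Type*) [AddCommGroup g] [Module ℝ g] [FiniteDimensional ℝ g]
    [AddCommGroup T] [Module ℝ T] [FiniteDimensional ℝ T]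
    [LieRing g] [LieAlgebra ℝ g]
    (Ω : T →ₗ[ℝ] T →ₗ[ℝ] ℝ)
    (hskew : ∀ v w : T, Ω v w = -Ω w v)
    (hnondeg : ∀ v : T, (∀ w : T, Ω v w = 0) → v = 0)
    (act : g →ₗ[ℝ] T)
    (DJ : T →ₗ[ℝ] Module.Dual ℝ g)
    (hDJ : ∀ (v : T) (ξ : g), DJ v ξ = Ω (act ξ) v) :
    LinearMap.range DJ = (LinearMap.ker act).dualAnnihilator := by
  have hrefl : Ω.IsRefl := fun x y h => by rw [hskew y x, h, neg_zero]
  have hnd : LinearMap.BilinForm.Nondegenerate Ω :=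
    ⟨hnondeg, fun y h => hnondeg y fun x => by rw [hskew, h x, neg_zero]⟩
  -- inclusion ⊆
  have hle : LinearMap.range DJ ≤ (LinearMap.ker act).dualAnnihilator := by
    rintro μ ⟨v, rfl⟩
    rw [Submodule.mem_dualAnnihilator]
    intro ξ hξ
    rw [hDJ, LinearMap.mem_ker.mp hξ, map_zero, LinearMap.zero_apply]
  -- kernel of DJ is the symplectic orthogonal of the range of act
  have hker : LinearMap.ker DJ = LinearMap.BilinForm.orthogonal Ω (LinearMap.range act) := by
    ext v
    simp only [LinearMap.mem_ker, LinearMap.BilinForm.mem_orthogonal_iff]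
    constructor
    · rintro h _ ⟨ξ, rfl⟩
      have := congrFun (congrArg (fun f => f.toFun) h) ξ
      simpa [LinearMap.BilinForm.IsOrtho, ← hDJ] using this
    · intro h
      ext ξ
      simpa [hDJ] using h (act ξ) ⟨ξ, rfl⟩
  -- dimension count
  have h1 : Module.finrank ℝ (LinearMap.ker DJ)
      = Module.finrank ℝ T - Module.finrank ℝ (LinearMap.range act) := by
    rw [hker]; exact LinearMap.BilinForm.finrank_orthogonal hnd _
  have h2 := LinearMap.finrank_range_add_finrank_ker DJ
  have h3 := LinearMap.finrank_range_add_finrank_ker act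
  have h4 : Module.finrank ℝ (LinearMap.ker act)
      + Module.finrank ℝ ((LinearMap.ker act).dualAnnihilator)
      = Module.finrank ℝ g := by
    have := LinearEquiv.finrank_eq (R := ℝ) (M := g ⧸ LinearMap.ker act) (N := (LinearMap.ker act).dualAnnihilator) (Subspace.quotEquivAnnihilator (LinearMap.ker act))
    rw [← this, add_comm, Submodule.finrank_quotient_add_finrank]
  have h5 : Module.finrank ℝ (LinearMap.range act) ≤ Module.finrank ℝ T :=
    Submodule.finrank_le _
  refine Submodule.eq_of_le_of_finrank_le hle ?_
  omega
end
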